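/- arXiv:2601.20531 — 2 statements merged into one kernel-verified Lean document; each statement's English description precedes it below -/
import Mathlib

section
/- For probability measures on ℝ^m, convolution is translation-compatible with quantization: if ν = ∑_{i=1}^k a_i δ_{x_i} is finitely supported and A ⊆ ℝ^m is a finite set, then for the set A' = ∪_i (A + x_i) of cardinality at most k·Card(A), one has d(x+x_i, A') ≤ d(x, A) for all x and all i; consequently the n-th geometric-mean quantization error satisfies log e_{kn}(μ*ν) ≤ log e_n(μ). -/
open MeasureTheory Metric
open scoped ENNReal NNReal

noncomputable def logEn (m n : ℕ) (μ : Measure (EuclideanSpace ℝ (Fin m))) : ℝ :=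
  sInf {y | ∃ A : Finset (EuclideanSpace ℝ (Fin m)), A.Nonempty ∧ A.card ≤ n ∧
    y = ∫ x, Real.log (infDist x (A : Set (EuclideanSpace ℝ (Fin m)))) ∂μ}

lemma infDist_shift (m : ℕ) [DecidableEq (EuclideanSpace ℝ (Fin m))]
    (v z : EuclideanSpace ℝ (Fin m)) (B : Finset (EuclideanSpace ℝ (Fin m))) :
    infDist (z + v) ((B.image (· + v) : Finset _) : Set (EuclideanSpace ℝ (Fin m)))
      = infDist z B := by
  rw [Finset.coe_image]
  exact infDist_image (IsometryEquiv.addRight v).isometry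

lemma infDist_unshift (m : ℕ) [DecidableEq (EuclideanSpace ℝ (Fin m))]
    (v z : EuclideanSpace ℝ (Fin m)) (C : Finset (EuclideanSpace ℝ (Fin m))) :
    infDist (z + v) (C : Set (EuclideanSpace ℝ (Fin m)))
      = infDist z ((C.image (· + (-v)) : Finset _) : Set (EuclideanSpace ℝ (Fin m))) := by
  rw [← infDist_shift m (-v) (z + v) C]
  simp

lemma key_ineq (m k : ℕ) [DecidableEq (EuclideanSpace ℝ (Fin m))]
    (x : Fin k → EuclideanSpace ℝ (Fin m))
    (B : Finset (EuclideanSpace ℝ (Fin m))) (hB : B.Nonempty)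
    (z : EuclideanSpace ℝ (Fin m)) (i : Fin k) :
    infDist (z + x i)
        (((Finset.univ : Finset (Fin k)).biUnion (fun j => B.image (· + x j)) : Finset _) :
          Set (EuclideanSpace ℝ (Fin m)))
      ≤ infDist z (B : Set (EuclideanSpace ℝ (Fin m))) := by
  rw [← infDist_shift m (x i) z B]
  apply infDist_le_infDist_of_subset
  · intro y hy
    simp only [Finset.coe_image, Finset.coe_biUnion, Finset.coe_univ, Set.mem_iUnion] at *
    exact ⟨i, Set.mem_univ i, hy⟩
  · obtain ⟨b, hb⟩ := hB
    exact ⟨b + x i, Finset.mem_coe.2 (Finset.mem_image_of_mem _ hb)⟩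

theorem convolution_codebook (m k n : ℕ) (hk : 0 < k) (hn : 0 < n)
    [DecidableEq (EuclideanSpace ℝ (Fin m))]
    (μ : Measure (EuclideanSpace ℝ (Fin m))) [IsProbabilityMeasure μ]
    (a : Fin k → NNReal) (ha : ∀ i, 0 < a i) (hsum : ∑ i, a i = 1)
    (x : Fin k → EuclideanSpace ℝ (Fin m))
    (A : Finset (EuclideanSpace ℝ (Fin m))) (hA : A.Nonempty)
    (hint : ∀ B : Finset (EuclideanSpace ℝ (Fin m)), B.Nonempty →
      Integrable (fun z => Real.log (infDist z (B : Set (EuclideanSpace ℝ (Fin m))))) μ)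
    (hbdd : BddBelow {y | ∃ B : Finset (EuclideanSpace ℝ (Fin m)), B.Nonempty ∧
      B.card ≤ k * n ∧ y = ∫ z, Real.log (infDist z (B : Set (EuclideanSpace ℝ (Fin m))))
        ∂(∑ i, (a i) • μ.map (· + x i))}) :
    ((Finset.univ : Finset (Fin k)).biUnion (fun i => A.image (· + x i))).card
        ≤ k * A.card ∧
    (∀ (z : EuclideanSpace ℝ (Fin m)) (i : Fin k),
      infDist (z + x i)
          (((Finset.univ : Finset (Fin k)).biUnion (fun i => A.image (· + x i)) : Finset _) :
            Set (EuclideanSpace ℝ (Fin m)))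
        ≤ infDist z (A : Set (EuclideanSpace ℝ (Fin m)))) ∧
    logEn m (k * n) (∑ i, (a i) • μ.map (· + x i)) ≤ logEn m n μ := by
  have cardbd : ∀ B : Finset (EuclideanSpace ℝ (Fin m)),
      ((Finset.univ : Finset (Fin k)).biUnion (fun i => B.image (· + x i))).card
        ≤ k * B.card := by
    intro B
    calc ((Finset.univ : Finset (Fin k)).biUnion (fun i => B.image (· + x i))).card
        ≤ ∑ i : Fin k, (B.image (· + x i)).card := Finset.card_biUnion_le
      _ ≤ ∑ _i : Fin k, B.card := Finset.sum_le_sum (fun i _ => Finset.card_image_le)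
      _ = k * B.card := by simp [Finset.sum_const, mul_comm]
  refine ⟨cardbd A, fun z i => key_ineq m k x A hA z i, ?_⟩
  set ν : Measure (EuclideanSpace ℝ (Fin m)) := ∑ i, (a i) • μ.map (· + x i) with hν
  have meas_log : ∀ (B : Finset (EuclideanSpace ℝ (Fin m)))
      (ρ : Measure (EuclideanSpace ℝ (Fin m))),
      AEStronglyMeasurable
        (fun z => Real.log (infDist z (B : Set (EuclideanSpace ℝ (Fin m))))) ρ := fun B ρ =>
    (Real.measurable_log.comp (continuous_infDist_pt _).measurable).aestronglyMeasurable
  have hshift_int : ∀ (B : Finset (EuclideanSpace ℝ (Fin m))), B.Nonempty → ∀ i : Fin k,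
      Integrable (fun z => Real.log (infDist (z + x i)
        (B : Set (EuclideanSpace ℝ (Fin m))))) μ := by
    intro B hB i
    have heq : (fun z => Real.log (infDist (z + x i) (B : Set (EuclideanSpace ℝ (Fin m)))))
        = fun z => Real.log (infDist z ((B.image (· + (-(x i))) : Finset _) :
          Set (EuclideanSpace ℝ (Fin m)))) := by
      funext z; rw [infDist_unshift]
    rw [heq]
    exact hint _ (hB.image _)
  have hmapint : ∀ (B : Finset (EuclideanSpace ℝ (Fin m))), B.Nonempty → ∀ i : Fin k,
      Integrable (fun z => Real.log (infDist z (B : Set (EuclideanSpace ℝ (Fin m)))))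
        (μ.map (· + x i)) := by
    intro B hB i
    rw [integrable_map_measure (meas_log B _) (measurable_add_const (x i)).aemeasurable]
    simpa [Function.comp_def] using hshift_int B hB i
  have hνint : ∀ (B : Finset (EuclideanSpace ℝ (Fin m))), B.Nonempty →
      Integrable (fun z => Real.log (infDist z (B : Set (EuclideanSpace ℝ (Fin m))))) ν := by
    intro B hB
    rw [hν]
    exact integrable_finset_sum_measure.2 (fun i _ => (hmapint B hB i).smul_measure_nnreal)
  have hνeval : ∀ (B : Finset (EuclideanSpace ℝ (Fin m))), B.Nonempty →
      (∫ z, Real.log (infDist z (B : Set (EuclideanSpace ℝ (Fin m)))) ∂ν)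
        = ∑ i, (a i : ℝ) *
            ∫ z, Real.log (infDist (z + x i) (B : Set (EuclideanSpace ℝ (Fin m)))) ∂μ := by
    intro B hB
    rw [hν, integral_finset_sum_measure (fun i _ => (hmapint B hB i).smul_measure_nnreal)]
    refine Finset.sum_congr rfl (fun i _ => ?_)
    rw [integral_smul_nnreal_measure,
      integral_map (measurable_add_const (x i)).aemeasurable (meas_log B _)]
    simp [NNReal.smul_def]
  obtain ⟨p0, hp0⟩ := hA
  have hSne : {y | ∃ B : Finset (EuclideanSpace ℝ (Fin m)), B.Nonempty ∧ B.card ≤ n ∧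
      y = ∫ z, Real.log (infDist z (B : Set (EuclideanSpace ℝ (Fin m)))) ∂μ}.Nonempty :=
    ⟨_, {p0}, Finset.singleton_nonempty p0, by simpa using Nat.one_le_iff_ne_zero.mpr hn.ne', rfl⟩
  -- pointwise-integral comparison for each i, or contradiction from hbdd
  by_cases hconst : ∀ i j : Fin k, x i = x j
  · -- all translations equal: exact equality of integrals
    unfold logEn
    apply le_csInf hSne
    rintro y ⟨B, hBne, hBcard, rfl⟩
    set B' := (Finset.univ : Finset (Fin k)).biUnion (fun i => B.image (· + x i)) with hB'
    have hB'ne : B'.Nonempty := by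
      obtain ⟨b, hb⟩ := hBne
      exact ⟨b + x ⟨0, hk⟩, Finset.mem_biUnion.2 ⟨⟨0, hk⟩, Finset.mem_univ _,
        Finset.mem_image_of_mem _ hb⟩⟩
    refine le_trans (csInf_le hbdd ⟨B', hB'ne,
      le_trans (cardbd B) (Nat.mul_le_mul_left k hBcard), rfl⟩) ?_
    rw [hνeval B' hB'ne]
    have hBeq : ∀ i : Fin k, B' = B.image (· + x i) := by
      intro i
      ext y
      simp only [hB', Finset.mem_biUnion, Finset.mem_univ, true_and, Finset.mem_image]
      constructor
      · rintro ⟨j, b, hb, rfl⟩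
        exact ⟨b, hb, by rw [hconst j i]⟩
      · rintro ⟨b, hb, rfl⟩
        exact ⟨i, b, hb, rfl⟩
    have : ∀ i : Fin k,
        (∫ z, Real.log (infDist (z + x i) (B' : Set (EuclideanSpace ℝ (Fin m)))) ∂μ)
          = ∫ z, Real.log (infDist z (B : Set (EuclideanSpace ℝ (Fin m)))) ∂μ := by
      intro i
      congr 1
      funext z
      rw [hBeq i, infDist_shift]
    rw [Finset.sum_congr rfl (fun i _ => by rw [this i]), ← Finset.sum_mul]
    have hsum' : (∑ i, (a i : ℝ)) = 1 := by exact_mod_cast congrArg NNReal.toReal hsum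
    rw [hsum', one_mul]
  · push_neg at hconst
    obtain ⟨i₀, j₀, hij⟩ := hconst
    by_cases hatom : ∀ z : EuclideanSpace ℝ (Fin m), μ {z} = 0
    · -- atomless case: a.e. pointwise log comparison
      haveI : NullSingletonClass μ := ⟨hatom⟩
      unfold logEn
      apply le_csInf hSne
      rintro y ⟨B, hBne, hBcard, rfl⟩
      set B' := (Finset.univ : Finset (Fin k)).biUnion (fun i => B.image (· + x i)) with hB'
      have hB'ne : B'.Nonempty := by
        obtain ⟨b, hb⟩ := hBne
        exact ⟨b + x ⟨0, hk⟩, Finset.mem_biUnion.2 ⟨⟨0, hk⟩, Finset.mem_univ _,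
          Finset.mem_image_of_mem _ hb⟩⟩
      refine le_trans (csInf_le hbdd ⟨B', hB'ne,
        le_trans (cardbd B) (Nat.mul_le_mul_left k hBcard), rfl⟩) ?_
      rw [hνeval B' hB'ne]
      have hle : ∀ i : Fin k,
          (∫ z, Real.log (infDist (z + x i) (B' : Set (EuclideanSpace ℝ (Fin m)))) ∂μ)
            ≤ ∫ z, Real.log (infDist z (B : Set (EuclideanSpace ℝ (Fin m)))) ∂μ := by
        intro i
        apply integral_mono_ae (hshift_int B' hB'ne i) (hint B hBne)
        have hD : μ ((B'.image (· + (-(x i))) : Finset _) :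
            Set (EuclideanSpace ℝ (Fin m))) = 0 :=
          (B'.image (· + (-(x i)))).countable_toSet.measure_zero μ
        filter_upwards [measure_eq_zero_iff_ae_notMem.1 hD] with z hz
        have hzero : infDist (z + x i) (B' : Set (EuclideanSpace ℝ (Fin m)))
            = infDist z ((B'.image (· + (-(x i))) : Finset _) :
              Set (EuclideanSpace ℝ (Fin m))) := infDist_unshift m (x i) z B'
        have hpos : 0 < infDist (z + x i) (B' : Set (EuclideanSpace ℝ (Fin m))) := by
          rw [hzero]
          exact ((B'.image (· + (-(x i)))).finite_toSet.isClosed.notMem_iff_infDist_pos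
            (by exact_mod_cast (hB'ne.image _).to_set)).1 hz
        exact Real.log_le_log hpos (key_ineq m k x B hBne z i)
      calc (∑ i, (a i : ℝ) *
            ∫ z, Real.log (infDist (z + x i) (B' : Set (EuclideanSpace ℝ (Fin m)))) ∂μ)
          ≤ ∑ i, (a i : ℝ) *
            ∫ z, Real.log (infDist z (B : Set (EuclideanSpace ℝ (Fin m)))) ∂μ :=
            Finset.sum_le_sum (fun i _ => mul_le_mul_of_nonneg_left (hle i) (a i).coe_nonneg)
        _ = ∫ z, Real.log (infDist z (B : Set (EuclideanSpace ℝ (Fin m)))) ∂μ := by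
            rw [← Finset.sum_mul]
            have hsum' : (∑ i, (a i : ℝ)) = 1 := by
              exact_mod_cast congrArg NNReal.toReal hsum
            rw [hsum', one_mul]
    · -- atomic case: hbdd is contradictory
      exfalso
      push_neg at hatom
      obtain ⟨z₀, hz₀⟩ := hatom
      obtain ⟨L, hL⟩ := hbdd
      set p : EuclideanSpace ℝ (Fin m) := z₀ + x i₀ with hp
      set q : EuclideanSpace ℝ (Fin m) := z₀ + x j₀ with hq
      have hpq : p ≠ q := fun h => hij (add_left_cancel (hp ▸ hq ▸ h))
      -- ν has an atom at q
      have hqm : ν {q} ≠ 0 := by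
        have h1 : (a j₀ : ℝ≥0∞) * μ {z₀} ≤ ν {q} := by
          rw [hν, Measure.finset_sum_apply]
          have : ((a j₀ : NNReal) • μ.map (· + x j₀)) {q} = (a j₀ : ℝ≥0∞) * μ {z₀} := by
            rw [Measure.smul_apply,
              Measure.map_apply (measurable_add_const (x j₀)) (measurableSet_singleton q)]
            have : (· + x j₀) ⁻¹' {q} = {z₀} := by
              ext w
              simp only [Set.mem_preimage, Set.mem_singleton_iff, hq]
              exact ⟨fun h => add_right_cancel h, fun h => by rw [h]⟩
            rw [this]
            simp [ENNReal.smul_def]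
          rw [← this]
          exact Finset.single_le_sum (f := fun i => ((a i) • μ.map (· + x i)) {q})
            (fun i _ => zero_le) (Finset.mem_univ j₀)
        intro h0
        rw [h0, nonpos_iff_eq_zero, mul_eq_zero] at h1
        rcases h1 with h1 | h1
        · exact (ENNReal.coe_ne_zero.2 (ha j₀).ne') h1
        · exact hz₀ h1
      have hνfin : IsFiniteMeasure ν := by
        rw [hν]
        infer_instance
      set c : ℝ := (ν {q}).toReal with hc
      have hcpos : 0 < c := ENNReal.toReal_pos hqm (measure_ne_top ν _)
      set K : ℝ := ∫ z, |Real.log (infDist z (({p} : Finset _) :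
        Set (EuclideanSpace ℝ (Fin m))))| ∂ν with hK
      have hKint : Integrable (fun z => |Real.log (infDist z (({p} : Finset _) :
          Set (EuclideanSpace ℝ (Fin m))))|) ν := (hνint {p} (Finset.singleton_nonempty p)).abs
      -- choose a very close second codepoint
      set s : ℝ := Real.exp ((L - K - 1) / c) with hs
      have hspos : 0 < s := Real.exp_pos _
      set q' : EuclideanSpace ℝ (Fin m) := q + (s / dist p q) • (p - q) with hq'
      have hdpq : 0 < dist p q := dist_pos.2 hpq
      have hqq' : dist q q' = s := by
        rw [hq', dist_comm, dist_eq_norm]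
        simp only [add_sub_cancel_left, norm_smul]
        rw [Real.norm_eq_abs, abs_div, abs_of_pos hspos, abs_of_pos hdpq, ← dist_eq_norm,
          div_mul_cancel₀ _ hdpq.ne']
      have hqne' : q ≠ q' := by
        intro h
        rw [← h] at hqq'
        simp at hqq'
        exact hspos.ne hqq'
      set C : Finset (EuclideanSpace ℝ (Fin m)) := {p, q'} with hC
      have hCne : C.Nonempty := ⟨p, by simp [hC]⟩
      have hCcard : C.card ≤ k * n := by
        have h2k : 2 ≤ k := by
          have : i₀ ≠ j₀ := fun h => hij (by rw [h])
          have := Fintype.one_lt_card_iff_nontrivial.2 ⟨⟨i₀, j₀, this⟩⟩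
          have h1 : 1 < k := by simpa using this
          omega
        calc C.card ≤ 2 := by
              rw [hC]
              exact (Finset.card_insert_le _ _).trans (by simp)
          _ ≤ k * n := le_trans h2k (Nat.le_mul_of_pos_right k hn)
      have hqnC : q ∉ (C : Set (EuclideanSpace ℝ (Fin m))) := by
        simp only [hC, Finset.coe_insert, Finset.coe_singleton, Set.mem_insert_iff,
          Set.mem_singleton_iff]
        push_neg
        exact ⟨fun h => hpq h.symm, hqne'⟩
      have hCint : Integrable (fun z => Real.log (infDist z
          (C : Set (EuclideanSpace ℝ (Fin m))))) ν := hνint C hCne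
      -- the value of codebook C is an element of the set, hence ≥ L
      have hmem : (∫ z, Real.log (infDist z (C : Set (EuclideanSpace ℝ (Fin m)))) ∂ν) ∈
          {y | ∃ B : Finset (EuclideanSpace ℝ (Fin m)), B.Nonempty ∧ B.card ≤ k * n ∧
            y = ∫ z, Real.log (infDist z (B : Set (EuclideanSpace ℝ (Fin m)))) ∂ν} :=
        ⟨C, hCne, hCcard, rfl⟩
      have hLle : L ≤ ∫ z, Real.log (infDist z (C : Set (EuclideanSpace ℝ (Fin m)))) ∂ν :=
        hL hmem
      -- split the integral at the atom q
      have hsplit : (∫ z, Real.log (infDist z (C : Set (EuclideanSpace ℝ (Fin m)))) ∂ν)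
          = (∫ z in {q}, Real.log (infDist z (C : Set (EuclideanSpace ℝ (Fin m)))) ∂ν)
            + ∫ z in ({q} : Set _)ᶜ,
                Real.log (infDist z (C : Set (EuclideanSpace ℝ (Fin m)))) ∂ν :=
        (integral_add_compl (measurableSet_singleton q) hCint).symm
      have hsing : (∫ z in {q}, Real.log (infDist z (C : Set (EuclideanSpace ℝ (Fin m)))) ∂ν)
          ≤ L - K - 1 := by
        rw [integral_singleton]
        have hdq_pos : 0 < infDist q (C : Set (EuclideanSpace ℝ (Fin m))) :=
          (C.finite_toSet.isClosed.notMem_iff_infDist_pos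
            (by exact_mod_cast hCne.to_set)).1 hqnC
        have hdq_le : infDist q (C : Set (EuclideanSpace ℝ (Fin m))) ≤ s := by
          refine le_trans (infDist_le_dist_of_mem ?_) hqq'.le
          simp [hC]
        have hlog : Real.log (infDist q (C : Set (EuclideanSpace ℝ (Fin m))))
            ≤ (L - K - 1) / c := by
          have := Real.log_le_log hdq_pos hdq_le
          rwa [hs, Real.log_exp] at this
        calc (ν {q}).toReal • Real.log (infDist q (C : Set (EuclideanSpace ℝ (Fin m))))
            ≤ c * ((L - K - 1) / c) := by
              rw [smul_eq_mul, ← hc]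
              exact mul_le_mul_of_nonneg_left hlog hcpos.le
          _ = L - K - 1 := mul_div_cancel₀ _ hcpos.ne'
      have hptle : ∀ z : EuclideanSpace ℝ (Fin m),
          Real.log (infDist z (C : Set (EuclideanSpace ℝ (Fin m))))
            ≤ |Real.log (infDist z (({p} : Finset _) : Set (EuclideanSpace ℝ (Fin m))))| := by
        intro z
        rcases eq_or_lt_of_le (infDist_nonneg (x := z)
          (s := (C : Set (EuclideanSpace ℝ (Fin m))))) with h0 | hpos
        · rw [← h0, Real.log_zero]
          exact abs_nonneg _
        · refine le_trans (Real.log_le_log hpos ?_) (le_abs_self _)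
          apply infDist_le_infDist_of_subset
          · intro y hy
            simp only [Finset.coe_singleton, Set.mem_singleton_iff] at hy
            simp [hy, hC]
          · exact ⟨p, by simp⟩
      have hcompl : (∫ z in ({q} : Set _)ᶜ,
            Real.log (infDist z (C : Set (EuclideanSpace ℝ (Fin m)))) ∂ν) ≤ K := by
        calc (∫ z in ({q} : Set _)ᶜ,
              Real.log (infDist z (C : Set (EuclideanSpace ℝ (Fin m)))) ∂ν)
            ≤ ∫ z in ({q} : Set _)ᶜ, |Real.log (infDist z (({p} : Finset _) :
                Set (EuclideanSpace ℝ (Fin m))))| ∂ν :=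
              setIntegral_mono hCint.integrableOn hKint.integrableOn hptle
          _ ≤ K := by
              rw [hK]
              exact setIntegral_le_integral hKint
                (Filter.Eventually.of_forall (fun z => abs_nonneg _))
      have : L ≤ (L - K - 1) + K := hLle.trans (hsplit ▸ add_le_add hsing hcompl)
      linarith
end

section
/- If ν is a finitely supported probability measure on ℝ^m and μ is a finite Borel measure, then the geometric-mean quantization dimension is invariant under convolution: D_0(μ * ν) = D_0(μ), assuming both dimensions exist. -/
open MeasureTheory Metric Filter
open scoped ENNReal NNReal

def HasQDimZero (m : ℕ) (μ : Measure (EuclideanSpace ℝ (Fin m))) (D : ℝ) : Prop :=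
  Tendsto (fun n : ℕ => Real.log n / (-(logEn m n μ))) atTop (nhds D)

noncomputable local instance (m : ℕ) : DecidableEq (EuclideanSpace ℝ (Fin m)) := Classical.decEq _

namespace QDAux

variable {m : ℕ}

/-- integrand -/
noncomputable def lid (A : Finset (EuclideanSpace ℝ (Fin m))) (y : EuclideanSpace ℝ (Fin m)) : ℝ :=
  Real.log (infDist y (A : Set (EuclideanSpace ℝ (Fin m))))

noncomputable def qval (μ : Measure (EuclideanSpace ℝ (Fin m)))
    (A : Finset (EuclideanSpace ℝ (Fin m))) : ℝ := ∫ y, lid A y ∂μ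

def qset (n : ℕ) (μ : Measure (EuclideanSpace ℝ (Fin m))) : Set ℝ :=
  {y | ∃ A : Finset (EuclideanSpace ℝ (Fin m)), A.Nonempty ∧ A.card ≤ n ∧ y = qval μ A}

lemma logEn_eq (n : ℕ) (μ : Measure (EuclideanSpace ℝ (Fin m))) :
    logEn m n μ = sInf (qset n μ) := rfl

lemma lid_measurable (A : Finset (EuclideanSpace ℝ (Fin m))) : Measurable (lid A) :=
  Real.measurable_log.comp (continuous_infDist_pt _).measurable

lemma qval_mem (μ : Measure (EuclideanSpace ℝ (Fin m))) {A : Finset (EuclideanSpace ℝ (Fin m))}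
    {n : ℕ} (hA : A.Nonempty) (hcard : A.card ≤ n) : qval μ A ∈ qset n μ :=
  ⟨A, hA, hcard, rfl⟩

lemma qset_mono (μ : Measure (EuclideanSpace ℝ (Fin m))) {p q : ℕ} (h : p ≤ q) :
    qset p μ ⊆ qset q μ := fun _ ⟨A, h1, h2, h3⟩ => ⟨A, h1, h2.trans h, h3⟩

lemma qset_nonempty (μ : Measure (EuclideanSpace ℝ (Fin m))) {n : ℕ} (hn : 1 ≤ n) :
    (qset n μ).Nonempty :=
  ⟨qval μ {0}, qval_mem μ (Finset.singleton_nonempty 0) (by simpa using hn)⟩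

lemma isometry_addRight (v : EuclideanSpace ℝ (Fin m)) : Isometry (fun z => z + v) :=
  Isometry.of_dist_eq fun a b => by simp [dist_add_right]

/-- translation identity -/
lemma infDist_shift (v : EuclideanSpace ℝ (Fin m)) (A : Finset (EuclideanSpace ℝ (Fin m)))
    (y : EuclideanSpace ℝ (Fin m)) :
    infDist (y + v) (A : Set (EuclideanSpace ℝ (Fin m)))
      = infDist y ((A.image (· + (-v)) : Finset (EuclideanSpace ℝ (Fin m))) :
          Set (EuclideanSpace ℝ (Fin m))) := by
  have h1 : (A : Set (EuclideanSpace ℝ (Fin m)))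
      = (fun z => z + v) '' ((A.image (· + (-v)) : Finset (EuclideanSpace ℝ (Fin m)))) := by
    rw [Finset.coe_image, ← Set.image_comp]
    have : ((fun z => z + v) ∘ (· + (-v))) = id := by
      funext z; simp [Function.comp]
    rw [this, Set.image_id]
  rw [h1, infDist_image (isometry_addRight v)]


section Conv

variable {k : ℕ}

lemma nnreal_smul_measure_eq {α : Type*} [MeasurableSpace α] (c : NNReal) (ν : Measure α) :
    c • ν = (c : ENNReal) • ν := rfl

lemma integrable_conv_iff (a : Fin k → NNReal) (x : Fin k → EuclideanSpace ℝ (Fin m))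
    (μ : Measure (EuclideanSpace ℝ (Fin m))) (ha : ∀ i, a i ≠ 0)
    {f : EuclideanSpace ℝ (Fin m) → ℝ} (hf : Measurable f) :
    Integrable f (∑ i, (a i) • μ.map (· + x i)) ↔
      ∀ i, Integrable (fun y => f (y + x i)) μ := by
  rw [show (∑ i, (a i) • μ.map (· + x i)) = ∑ i ∈ Finset.univ, (a i) • μ.map (· + x i) from rfl,
    integrable_finset_sum_measure]
  have key : ∀ i : Fin k, Integrable f ((a i) • μ.map (· + x i)) ↔
      Integrable (fun y => f (y + x i)) μ := by
    intro i
    rw [nnreal_smul_measure_eq,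
      integrable_smul_measure (by exact_mod_cast ha i) ENNReal.coe_ne_top,
      integrable_map_measure hf.aestronglyMeasurable (measurable_add_const (x i)).aemeasurable]
    rfl
  constructor
  · intro h i; exact (key i).1 (h i (Finset.mem_univ i))
  · intro h i _; exact (key i).2 (h i)

lemma integral_conv (a : Fin k → NNReal) (x : Fin k → EuclideanSpace ℝ (Fin m))
    (μ : Measure (EuclideanSpace ℝ (Fin m))) (ha : ∀ i, a i ≠ 0)
    {f : EuclideanSpace ℝ (Fin m) → ℝ} (hf : Measurable f)
    (hint : Integrable f (∑ i, (a i) • μ.map (· + x i))) :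
    ∫ y, f y ∂(∑ i, (a i) • μ.map (· + x i))
      = ∑ i, (a i : ℝ) * ∫ y, f (y + x i) ∂μ := by
  have hi := (integrable_conv_iff a x μ ha hf).1 hint
  have hint' : ∀ i ∈ Finset.univ, Integrable f ((a i) • μ.map (· + x i)) := by
    intro i _
    rw [nnreal_smul_measure_eq,
      integrable_smul_measure (by exact_mod_cast ha i) ENNReal.coe_ne_top,
      integrable_map_measure hf.aestronglyMeasurable (measurable_add_const (x i)).aemeasurable]
    exact hi i
  rw [show (∑ i, (a i) • μ.map (· + x i)) = ∑ i ∈ Finset.univ, (a i) • μ.map (· + x i) from rfl,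
    integral_finset_sum_measure hint']
  congr 1
  funext i
  rw [nnreal_smul_measure_eq, integral_smul_measure,
    integral_map (measurable_add_const (x i)).aemeasurable hf.aestronglyMeasurable]
  simp [smul_eq_mul]

lemma lid_comp_eq (A' : Finset (EuclideanSpace ℝ (Fin m))) (v : EuclideanSpace ℝ (Fin m)) :
    (fun y => lid A' (y + v)) = lid (A'.image (· + (-v))) := by
  funext y; unfold lid; rw [infDist_shift]

lemma claimB (hk : 0 < k) (a : Fin k → NNReal) (x : Fin k → EuclideanSpace ℝ (Fin m))
    (μ : Measure (EuclideanSpace ℝ (Fin m))) (ha : ∀ i, 0 < a i) (hsum : ∑ i, a i = 1)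
    (A' : Finset (EuclideanSpace ℝ (Fin m))) :
    ∃ i : Fin k, qval μ (A'.image (· + (-x i))) ≤ qval (∑ i, (a i) • μ.map (· + x i)) A' := by
  have ha' : ∀ i, a i ≠ 0 := fun i => (ha i).ne'
  by_cases hint : Integrable (lid A') (∑ i, (a i) • μ.map (· + x i))
  · have hdec := integral_conv a x μ ha' (lid_measurable A') hint
    have hv : ∀ i, ∫ y, lid A' (y + x i) ∂μ = qval μ (A'.image (· + (-x i))) := by
      intro i; rw [show (fun y => lid A' (y + x i)) = lid (A'.image (· + (-x i))) from
        lid_comp_eq A' (x i)]; rfl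
    haveI : Nonempty (Fin k) := ⟨⟨0, hk⟩⟩
    obtain ⟨i₀, -, hmin⟩ := Finset.exists_min_image Finset.univ
      (fun i => qval μ (A'.image (· + (-x i)))) ⟨Classical.arbitrary _, Finset.mem_univ _⟩
    refine ⟨i₀, ?_⟩
    have : qval (∑ i, (a i) • μ.map (· + x i)) A'
        = ∑ i, (a i : ℝ) * qval μ (A'.image (· + (-x i))) := by
      rw [show qval (∑ i, (a i) • μ.map (· + x i)) A'
        = ∫ y, lid A' y ∂(∑ i, (a i) • μ.map (· + x i)) from rfl, hdec]
      congr 1; funext i; rw [hv i]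
    rw [this]
    have hsum' : ∑ i, (a i : ℝ) = 1 := by exact_mod_cast congrArg NNReal.toReal hsum
    calc qval μ (A'.image (· + (-x i₀)))
        = ∑ i, (a i : ℝ) * qval μ (A'.image (· + (-x i₀))) := by
          rw [← Finset.sum_mul, hsum', one_mul]
      _ ≤ ∑ i, (a i : ℝ) * qval μ (A'.image (· + (-x i))) := by
          apply Finset.sum_le_sum
          intro i _
          exact mul_le_mul_of_nonneg_left (hmin i (Finset.mem_univ i)) (a i).coe_nonneg
  · have : ∃ i, ¬ Integrable (fun y => lid A' (y + x i)) μ := by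
      by_contra h
      push_neg at h
      exact hint ((integrable_conv_iff a x μ ha' (lid_measurable A')).2 h)
    obtain ⟨i, hni⟩ := this
    refine ⟨i, ?_⟩
    have h1 : qval μ (A'.image (· + (-x i))) = 0 := by
      rw [show qval μ (A'.image (· + (-x i))) = ∫ y, lid (A'.image (· + (-x i))) y ∂μ from rfl]
      rw [← lid_comp_eq A' (x i)]
      exact integral_undef (by simpa using hni)
    have h2 : qval (∑ i, (a i) • μ.map (· + x i)) A' = 0 := integral_undef hint
    rw [h1, h2]

end Conv


section Psi

noncomputable def psi (r : ℝ) : ℝ≥0∞ :=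
  if r = 0 then ⊤ else ENNReal.ofReal (max (-Real.log r) 0)

lemma psi_measurable : Measurable psi := by
  unfold psi
  exact Measurable.ite (measurableSet_eq) measurable_const
    (ENNReal.measurable_ofReal.comp ((Real.measurable_log.neg).max measurable_const))

lemma psi_anti {r d : ℝ} (hr : 0 ≤ r) (hrd : r ≤ d) : psi d ≤ psi r := by
  unfold psi
  rcases eq_or_lt_of_le hr with h0 | h0
  · rw [if_pos h0.symm]
    exact le_top
  · rw [if_neg (lt_of_lt_of_le h0 hrd).ne', if_neg h0.ne']
    exact ENNReal.ofReal_le_ofReal (max_le_max (neg_le_neg (Real.log_le_log h0 hrd)) le_rfl)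

lemma ofReal_neglog_le_psi (r : ℝ) :
    ENNReal.ofReal (max (-Real.log r) 0) ≤ psi r := by
  unfold psi
  split
  · exact le_top
  · exact le_rfl

lemma neglog_le_two_rpow {u : ℝ} (hu : 0 < u) : -Real.log u ≤ 2 * u ^ (-(1:ℝ)/2) := by
  have h1 : Real.log (u ^ (-(1:ℝ)/2)) = (-(1:ℝ)/2) * Real.log u := Real.log_rpow hu _
  have h2 : Real.log (u ^ (-(1:ℝ)/2)) ≤ u ^ (-(1:ℝ)/2) - 1 :=
    Real.log_le_sub_one_of_pos (Real.rpow_pos_of_pos hu _)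
  nlinarith [Real.rpow_pos_of_pos hu (-(1:ℝ)/2)]

lemma lintegral_psi_abs_lt_top : ∫⁻ u : ℝ, psi |u| < ⊤ := by
  have hae : (fun u : ℝ => psi |u|)
      =ᵐ[volume] fun u => ENNReal.ofReal (max (-Real.log |u|) 0) := by
    have hsub : {u : ℝ | psi |u| ≠ ENNReal.ofReal (max (-Real.log |u|) 0)} ⊆ {0} := by
      intro u hu
      by_contra h
      exact hu (by unfold psi; rw [if_neg (abs_ne_zero.2 (by simpa using h))])
    exact measure_mono_null hsub Real.volume_singleton
  rw [lintegral_congr_ae hae]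
  set Fp : ℝ → ℝ≥0∞ := fun u => if 0 < u then ENNReal.ofReal (max (-Real.log u) 0) else 0 with hFp
  have hFpm : Measurable Fp := by
    exact Measurable.ite (measurableSet_lt measurable_const measurable_id)
      (ENNReal.measurable_ofReal.comp ((Real.measurable_log.neg).max measurable_const))
      measurable_const
  have hpt : ∀ u : ℝ, ENNReal.ofReal (max (-Real.log |u|) 0) ≤ Fp u + Fp (-u) := by
    intro u
    rcases lt_trichotomy u 0 with h | h | h
    · have : |u| = -u := abs_of_neg h
      rw [this, hFp]
      simp only [not_lt.2 h.le, if_neg (lt_asymm h), neg_pos.2 h, if_pos]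
      exact le_add_self
    · subst h
      simp [Real.log_zero]
    · have : |u| = u := abs_of_pos h
      rw [this, hFp]
      simp only [if_pos h]
      exact le_self_add
  have hneg : ∫⁻ u : ℝ, Fp (-u) = ∫⁻ u : ℝ, Fp u :=
    (Measure.measurePreserving_neg (volume : Measure ℝ)).lintegral_comp hFpm
  have hFpfin : ∫⁻ u : ℝ, Fp u < ⊤ := by
    have hint : IntegrableOn (fun u : ℝ => 2 * u ^ (-(1:ℝ)/2)) (Set.Ioo 0 1) := by
      exact ((intervalIntegral.integrableOn_Ioo_rpow_iff zero_lt_one).2 (by norm_num)).const_mul 2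
    have hb : ∀ u : ℝ, Fp u ≤ (Set.Ioo (0:ℝ) 1).indicator
        (fun u => ENNReal.ofReal (2 * u ^ (-(1:ℝ)/2))) u := by
      intro u
      rcases le_or_gt u 0 with h | h
      · simp only [hFp]; simp [not_lt.2 h]
      · rcases lt_or_ge u 1 with h1 | h1
        · simp only [hFp]
          rw [Set.indicator_of_mem (by exact ⟨h, h1⟩ : u ∈ Set.Ioo (0:ℝ) 1), if_pos h]
          exact ENNReal.ofReal_le_ofReal
            (max_le (neglog_le_two_rpow h) (by positivity))
        · simp only [hFp]
          rw [Set.indicator_of_notMem (by simp [h1] : u ∉ Set.Ioo (0:ℝ) 1), if_pos h]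
          have h2 : max (-Real.log u) 0 = 0 :=
            max_eq_right (by simpa using Real.log_nonneg h1)
          rw [h2, ENNReal.ofReal_zero]
    calc ∫⁻ u : ℝ, Fp u
        ≤ ∫⁻ u : ℝ, (Set.Ioo (0:ℝ) 1).indicator
          (fun u => ENNReal.ofReal (2 * u ^ (-(1:ℝ)/2))) u := lintegral_mono hb
      _ = ∫⁻ u in Set.Ioo (0:ℝ) 1, ENNReal.ofReal (2 * u ^ (-(1:ℝ)/2)) :=
          lintegral_indicator measurableSet_Ioo _
      _ < ⊤ := hint.lintegral_lt_top
  calc ∫⁻ u : ℝ, ENNReal.ofReal (max (-Real.log |u|) 0)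
      ≤ ∫⁻ u : ℝ, (Fp u + Fp (-u)) := lintegral_mono hpt
    _ = (∫⁻ u : ℝ, Fp u) + ∫⁻ u : ℝ, Fp (-u) :=
        lintegral_add_left hFpm _
    _ < ⊤ := by
        rw [hneg]
        exact ENNReal.add_lt_top.2 ⟨hFpfin, hFpfin⟩

end Psi


section GoodT

noncomputable def e1 (hm : 0 < m) : EuclideanSpace ℝ (Fin m) :=
  EuclideanSpace.single (⟨0, hm⟩ : Fin m) (1:ℝ)

lemma norm_e1 (hm : 0 < m) : ‖e1 (m := m) hm‖ = 1 := by
  unfold e1; rw [EuclideanSpace.norm_single]; norm_num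

lemma coord_le_norm (v : EuclideanSpace ℝ (Fin m)) (i : Fin m) : |v i| ≤ ‖v‖ := by
  calc |v i| = ‖v i‖ := (Real.norm_eq_abs _).symm
    _ = Real.sqrt (‖v i‖ ^ 2) := (Real.sqrt_sq (norm_nonneg _)).symm
    _ ≤ Real.sqrt (∑ j, ‖v j‖ ^ 2) := Real.sqrt_le_sqrt
        (Finset.single_le_sum (f := fun j => ‖v j‖ ^ 2) (fun j _ => sq_nonneg _)
          (Finset.mem_univ i))
    _ = ‖v‖ := (EuclideanSpace.norm_eq v).symm

lemma dist_coord_lb (hm : 0 < m) (p z : EuclideanSpace ℝ (Fin m)) (t : ℝ) :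
    |(z - p) ⟨0, hm⟩ - t| ≤ dist z (p + t • e1 hm) := by
  rw [dist_eq_norm]
  have hco : (z - (p + t • e1 hm)) ⟨0,hm⟩ = (z - p) ⟨0,hm⟩ - t := by
    simp [e1, PiLp.sub_apply, PiLp.add_apply, PiLp.smul_apply,
      EuclideanSpace.single_apply]
    ring
  rw [← hco]
  exact coord_le_norm _ _

lemma exists_good_t (hm : 0 < m) (μ : Measure (EuclideanSpace ℝ (Fin m))) [IsFiniteMeasure μ]
    (P : Finset (EuclideanSpace ℝ (Fin m))) {δ : ℝ} (hδ : 0 < δ) :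
    ∃ t : ℝ, 0 < t ∧ t < δ ∧
      ∀ p ∈ P, ∫⁻ z, psi (dist z (p + t • e1 hm)) ∂μ < ⊤ := by
  set ν := (volume : Measure ℝ).restrict (Set.Ioo (0:ℝ) δ) with hν
  have hgabs : Measurable (fun u : ℝ => psi |u|) := psi_measurable.comp measurable_abs
  have hmain : ∀ p : EuclideanSpace ℝ (Fin m),
      ∀ᵐ t ∂ν, ∫⁻ z, psi (dist z (p + t • e1 hm)) ∂μ < ⊤ := by
    intro p
    set f : ℝ → EuclideanSpace ℝ (Fin m) → ℝ≥0∞ :=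
      fun t z => psi (dist z (p + t • e1 hm)) with hf
    have hfm : Measurable (Function.uncurry f) := by
      apply psi_measurable.comp
      exact (continuous_snd.dist
        (continuous_const.add (continuous_fst.smul continuous_const))).measurable
    have hswap : ∫⁻ t, (∫⁻ z, f t z ∂μ) ∂ν = ∫⁻ z, (∫⁻ t, f t z ∂ν) ∂μ :=
      lintegral_lintegral_swap hfm.aemeasurable
    have htrans : ∀ c : ℝ, ∫⁻ t : ℝ, psi |c - t| = ∫⁻ u : ℝ, psi |u| := by
      intro c
      have hg2 : Measurable fun s : ℝ => psi |c + s| :=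
        hgabs.comp (measurable_const.add measurable_id)
      have h1 : ∫⁻ t : ℝ, psi |c - t|
          = ∫⁻ t : ℝ, (fun s : ℝ => psi |c + s|) (-t) :=
        lintegral_congr fun t => by rw [sub_eq_add_neg]
      have e1' : ∫⁻ t : ℝ, (fun s : ℝ => psi |c + s|) (-t) = ∫⁻ s : ℝ, psi |c + s| :=
        (Measure.measurePreserving_neg (volume : Measure ℝ)).lintegral_comp hg2
      rw [h1, e1']
      calc ∫⁻ s : ℝ, psi |c + s| = ∫⁻ s : ℝ, (fun u : ℝ => psi |u|) (s + c) :=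
            lintegral_congr fun s => by rw [add_comm]
        _ = ∫⁻ u : ℝ, psi |u| :=
            lintegral_add_right_eq_self (fun u : ℝ => psi |u|) c
    have hinner : ∀ z, (∫⁻ t, f t z ∂ν) ≤ ∫⁻ u : ℝ, psi |u| := by
      intro z
      calc ∫⁻ t, f t z ∂ν ≤ ∫⁻ t, psi |(z - p) ⟨0,hm⟩ - t| ∂ν :=
            lintegral_mono fun t => psi_anti (abs_nonneg _) (dist_coord_lb hm p z t)
        _ ≤ ∫⁻ t : ℝ, psi |(z - p) ⟨0,hm⟩ - t| := setLIntegral_le_lintegral _ _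
        _ = ∫⁻ u : ℝ, psi |u| := htrans _
    have hfin : ∫⁻ t, (∫⁻ z, f t z ∂μ) ∂ν < ⊤ := by
      rw [hswap]
      calc ∫⁻ z, (∫⁻ t, f t z ∂ν) ∂μ ≤ ∫⁻ _z, (∫⁻ u : ℝ, psi |u|) ∂μ :=
            lintegral_mono hinner
        _ = (∫⁻ u : ℝ, psi |u|) * μ Set.univ := lintegral_const _
        _ < ⊤ := ENNReal.mul_lt_top lintegral_psi_abs_lt_top (measure_lt_top μ _)
    exact ae_lt_top hfm.lintegral_prod_right' hfin.ne
  have hcnt := (ae_ball_iff (P.countable_toSet)).2 (fun p _ => hmain p)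
  have hmem := ae_restrict_mem (μ := (volume : Measure ℝ)) (measurableSet_Ioo (a := (0:ℝ)) (b := δ))
  have hne : ν ≠ 0 := by
    simp only [hν, Ne, Measure.restrict_eq_zero, Real.volume_Ioo]
    rw [ENNReal.ofReal_eq_zero]
    push_neg
    linarith
  haveI : (ae ν).NeBot := ae_neBot.2 hne
  obtain ⟨t, h1, h2⟩ := (hcnt.and hmem).exists
  exact ⟨t, h2.1, h2.2, fun p hp => h1 p (Finset.mem_coe.2 hp)⟩

lemma atom_zero_of_psi {μ : Measure (EuclideanSpace ℝ (Fin m))}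
    {q : EuclideanSpace ℝ (Fin m)} (h : ∫⁻ z, psi (dist z q) ∂μ < ⊤) : μ {q} = 0 := by
  by_contra hq
  have h1 : ∀ z ∈ ({q} : Set (EuclideanSpace ℝ (Fin m))), psi (dist z q) = ⊤ := by
    intro z hz
    rw [Set.mem_singleton_iff.1 hz, dist_self]
    unfold psi; rw [if_pos rfl]
  have h2 : ∫⁻ z in {q}, psi (dist z q) ∂μ = ⊤ * μ {q} := by
    rw [setLIntegral_congr_fun (measurableSet_singleton q) h1,
      setLIntegral_const]
  have h3 := setLIntegral_le_lintegral ({q} : Set (EuclideanSpace ℝ (Fin m)))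
    (fun z => psi (dist z q)) (μ := μ)
  rw [h2, ENNReal.top_mul hq] at h3
  exact absurd (lt_of_le_of_lt h3 h) (lt_irrefl _)

lemma integrable_neglog_of_psi {μ : Measure (EuclideanSpace ℝ (Fin m))}
    {q : EuclideanSpace ℝ (Fin m)} (h : ∫⁻ z, psi (dist z q) ∂μ < ⊤) :
    Integrable (fun z => max (-Real.log (dist z q)) 0) μ := by
  refine ⟨(((Real.measurable_log.comp
    ((continuous_id.dist continuous_const).measurable)).neg.max
      measurable_const)).aestronglyMeasurable, ?_⟩
  rw [hasFiniteIntegral_iff_ofReal (f := fun z => max (-Real.log (dist z q)) 0)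
    (ae_of_all _ fun z => le_max_right _ _)]
  exact lt_of_le_of_lt (lintegral_mono fun z => ofReal_neglog_le_psi _) h

end GoodT


section ClaimA

lemma claimA (hm : 0 < m) {k : ℕ} (hk : 0 < k) (a : Fin k → NNReal)
    (x : Fin k → EuclideanSpace ℝ (Fin m)) (μ : Measure (EuclideanSpace ℝ (Fin m)))
    [IsFiniteMeasure μ] (ha : ∀ i, 0 < a i) (hsum : ∑ i, a i = 1)
    (A : Finset (EuclideanSpace ℝ (Fin m))) (hA : A.Nonempty) {ε : ℝ} (hε : 0 < ε) :
    ∃ A'' : Finset (EuclideanSpace ℝ (Fin m)), A''.Nonempty ∧ A''.card ≤ A.card * k ∧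
      qval (∑ i, (a i) • μ.map (· + x i)) A'' ≤ qval μ A + ε := by
  haveI : Nonempty (Fin k) := ⟨⟨0, hk⟩⟩
  have ha' : ∀ i, a i ≠ 0 := fun i => (ha i).ne'
  by_cases hg : Integrable (lid A) μ
  · -- main case
    set d : EuclideanSpace ℝ (Fin m) → ℝ := fun y => infDist y (A : Set (EuclideanSpace ℝ (Fin m))) with hd
    have hdm : Measurable d := (continuous_infDist_pt _).measurable
    set H : ℝ → EuclideanSpace ℝ (Fin m) → ℝ :=
      fun δ y => if d y = 0 then 0 else Real.log (d y + δ) with hH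
    have hHm : ∀ δ, Measurable (H δ) := by
      intro δ
      exact Measurable.ite (hdm (measurableSet_singleton 0)) measurable_const
        (Real.measurable_log.comp (hdm.add measurable_const))
    have hdnn : ∀ y, 0 ≤ d y := fun y => infDist_nonneg
    have hbound : ∀ δ : ℝ, 0 < δ → δ ≤ 1 → ∀ y, |H δ y| ≤ |lid A y| + Real.log 2 := by
      intro δ hδ0 hδ1 y
      have h2 : (0:ℝ) ≤ Real.log 2 := Real.log_nonneg one_le_two
      have hlid : lid A y = Real.log (d y) := rfl
      rcases eq_or_lt_of_le (hdnn y) with h0 | h0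
      · have hdy : d y = 0 := h0.symm
        show |if d y = 0 then (0:ℝ) else Real.log (d y + δ)| ≤ _
        rw [if_pos hdy, abs_zero]
        positivity
      · have hdy : d y ≠ 0 := h0.ne'
        show |if d y = 0 then (0:ℝ) else Real.log (d y + δ)| ≤ _
        rw [if_neg hdy, hlid, abs_le]
        constructor
        · have h3 : -|Real.log (d y)| ≤ Real.log (d y) := neg_abs_le _
          have hlow : Real.log (d y) ≤ Real.log (d y + δ) :=
            Real.log_le_log h0 (by linarith)
          linarith
        · rcases le_or_gt (d y) 1 with h1 | h1
          · have h4 : Real.log (d y + δ) ≤ Real.log 2 :=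
              Real.log_le_log (by linarith) (by linarith)
            have h5 := abs_nonneg (Real.log (d y))
            linarith
          · have h4 : Real.log (d y + δ) ≤ Real.log (2 * d y) :=
              Real.log_le_log (by linarith) (by linarith)
            rw [Real.log_mul two_ne_zero (by linarith)] at h4
            have h5 : Real.log (d y) ≤ |Real.log (d y)| := le_abs_self _
            linarith
    have hH_int : ∀ δ : ℝ, 0 < δ → δ ≤ 1 → Integrable (H δ) μ := by
      intro δ hδ0 hδ1
      refine Integrable.mono' (hg.abs.add (integrable_const (Real.log 2)))
        (hHm δ).aestronglyMeasurable (ae_of_all _ fun y => ?_)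
      rw [Real.norm_eq_abs]
      exact hbound δ hδ0 hδ1 y
    have hglim : Tendsto (fun j : ℕ => ∫ y, H (1/(j+1)) y ∂μ) atTop
        (nhds (∫ y, lid A y ∂μ)) := by
      have hj0 : ∀ j : ℕ, 0 < (1:ℝ)/(j+1) := fun j => by positivity
      have hj1 : ∀ j : ℕ, (1:ℝ)/(j+1) ≤ 1 := fun j => by
        rw [div_le_one (by positivity)]
        have : (0:ℝ) ≤ (j:ℝ) := Nat.cast_nonneg j
        linarith
      apply tendsto_integral_of_dominated_convergence
        (fun y => |lid A y| + Real.log 2)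
        (fun j => (hHm _).aestronglyMeasurable)
        (hg.abs.add (integrable_const (Real.log 2)))
      · intro j
        apply ae_of_all
        intro y
        rw [Real.norm_eq_abs]
        exact hbound _ (hj0 j) (hj1 j) y
      · apply ae_of_all
        intro y
        rcases eq_or_lt_of_le (hdnn y) with h0 | h0
        · have hdy : d y = 0 := h0.symm
          have hlid : lid A y = 0 := by
            show Real.log (d y) = 0
            rw [hdy, Real.log_zero]
          have hz : ∀ j : ℕ, H (1/(j+1)) y = 0 := fun j => by
            show (if d y = 0 then (0:ℝ) else _) = 0
            rw [if_pos hdy]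
          rw [hlid]
          have hfz : (fun j : ℕ => H (1/(j+1)) y) = fun _ : ℕ => (0:ℝ) := funext hz
          rw [hfz]
          exact tendsto_const_nhds
        · have hdy : d y ≠ 0 := h0.ne'
          have hfun : (fun j : ℕ => H (1/(j+1)) y)
              = fun j : ℕ => Real.log (d y + 1/(j+1)) := by
            funext j
            show (if d y = 0 then (0:ℝ) else _) = _
            rw [if_neg hdy]
          rw [hfun]
          have h1 : Tendsto (fun j : ℕ => d y + 1/(j+1)) atTop (nhds (d y)) := by
            have h0' := (tendsto_const_nhds :
              Tendsto (fun _ : ℕ => d y) atTop (nhds (d y))).add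
              tendsto_one_div_add_atTop_nhds_zero_nat
            simpa using h0'
          exact ((Real.continuousAt_log hdy).tendsto).comp h1
    obtain ⟨j, hj⟩ : ∃ j : ℕ, ∫ y, H (1/(j+1)) y ∂μ ≤ qval μ A + ε := by
      have hlt : ∫ y, lid A y ∂μ < qval μ A + ε := by
        have : qval μ A = ∫ y, lid A y ∂μ := rfl
        linarith
      exact (hglim.eventually (eventually_le_nhds hlt)).exists
    set δ : ℝ := 1/(j+1) with hδdef
    have hδ0 : 0 < δ := by positivity
    have hδ1 : δ ≤ 1 := by
      rw [hδdef, div_le_one (by positivity)]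
      have : (0:ℝ) ≤ (j:ℝ) := Nat.cast_nonneg j
      linarith
    set P : Finset (EuclideanSpace ℝ (Fin m)) :=
      Finset.image (fun q : (EuclideanSpace ℝ (Fin m)) × (Fin k × Fin k) =>
        q.1 + x q.2.1 - x q.2.2) (A ×ˢ (Finset.univ ×ˢ Finset.univ)) with hP
    obtain ⟨t, ht0, htδ, htP⟩ := exists_good_t hm μ P hδ0
    set sv : EuclideanSpace ℝ (Fin m) := t • e1 hm with hsv
    have hnorms : ‖sv‖ = t := by
      rw [hsv, norm_smul, norm_e1, Real.norm_eq_abs, abs_of_pos ht0, mul_one]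
    set A'' : Finset (EuclideanSpace ℝ (Fin m)) :=
      Finset.image (fun q : (EuclideanSpace ℝ (Fin m)) × Fin k => q.1 + sv + x q.2)
        (A ×ˢ Finset.univ) with hA''
    have hprodne : (A ×ˢ (Finset.univ : Finset (Fin k))).Nonempty :=
      hA.product Finset.univ_nonempty
    have hA''ne : A''.Nonempty := hprodne.image _
    have hA''card : A''.card ≤ A.card * k := by
      calc A''.card ≤ (A ×ˢ (Finset.univ : Finset (Fin k))).card := Finset.card_image_le
        _ = A.card * k := by rw [Finset.card_product, Finset.card_univ, Fintype.card_fin]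
    set B : Fin k → Finset (EuclideanSpace ℝ (Fin m)) :=
      fun i => A''.image (· + (-x i)) with hB
    have hBne : ∀ i, (B i).Nonempty := fun i => hA''ne.image _
    have hBsubP : ∀ i, ∀ b ∈ B i, ∃ p ∈ P, b = p + sv := by
      intro i b hb
      rw [hB] at hb
      obtain ⟨w, hw, rfl⟩ := Finset.mem_image.1 hb
      rw [hA''] at hw
      obtain ⟨q, hq, rfl⟩ := Finset.mem_image.1 hw
      refine ⟨q.1 + x q.2 - x i, ?_, by abel⟩
      rw [hP]
      apply Finset.mem_image.2
      refine ⟨(q.1, (q.2, i)), ?_, rfl⟩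
      rw [Finset.mem_product] at hq ⊢
      refine ⟨hq.1, ?_⟩
      rw [Finset.mem_product]
      exact ⟨Finset.mem_univ _, Finset.mem_univ _⟩
    have hBnull : ∀ i, μ ((B i : Set (EuclideanSpace ℝ (Fin m)))) = 0 := by
      intro i
      have hsub : (B i : Set (EuclideanSpace ℝ (Fin m)))
          ⊆ ⋃ p ∈ (P : Set (EuclideanSpace ℝ (Fin m))), {p + sv} := by
        intro b hb
        obtain ⟨p, hp, rfl⟩ := hBsubP i b hb
        exact Set.mem_biUnion hp rfl
      refine measure_mono_null hsub ?_
      rw [measure_biUnion_null_iff (P.countable_toSet)]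
      intro p hp
      exact atom_zero_of_psi (htP p hp)
    have hABsub : ∀ i, A.image (· + sv) ⊆ B i := by
      intro i b hb
      obtain ⟨c, hc, rfl⟩ := Finset.mem_image.1 hb
      rw [hB]
      apply Finset.mem_image.2
      refine ⟨c + sv + x i, ?_, by abel⟩
      rw [hA'']
      apply Finset.mem_image.2
      exact ⟨(c, i), Finset.mem_product.2 ⟨hc, Finset.mem_univ _⟩, rfl⟩
    have hinf_le : ∀ i y, infDist y ((B i : Set (EuclideanSpace ℝ (Fin m)))) ≤ d y + t := by
      intro i y
      have h1 : infDist y ((B i : Set (EuclideanSpace ℝ (Fin m))))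
          ≤ infDist y ((A.image (· + sv) : Finset (EuclideanSpace ℝ (Fin m))) :
              Set (EuclideanSpace ℝ (Fin m))) :=
        infDist_le_infDist_of_subset (Finset.coe_subset.2 (hABsub i))
          (Finset.coe_nonempty.2 (hA.image _))
      have h2 : infDist (y + (-sv)) (A : Set (EuclideanSpace ℝ (Fin m)))
          = infDist y ((A.image (· + sv) : Finset (EuclideanSpace ℝ (Fin m))) :
              Set (EuclideanSpace ℝ (Fin m))) := by
        have := infDist_shift (-sv) A y
        simpa [neg_neg] using this
      have h3 : infDist (y + (-sv)) (A : Set (EuclideanSpace ℝ (Fin m)))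
          ≤ infDist y (A : Set (EuclideanSpace ℝ (Fin m))) + dist (y + (-sv)) y :=
        infDist_le_infDist_add_dist
      have h4 : dist (y + (-sv)) y = t := by
        rw [dist_eq_norm]
        have : y + (-sv) - y = -sv := by abel
        rw [this, norm_neg, hnorms]
      rw [h2] at h3
      rw [h4] at h3
      exact h1.trans h3
    have hptwise : ∀ i, ∀ᵐ y ∂μ, lid (B i) y ≤ H δ y := by
      intro i
      have hae : ∀ᵐ y ∂μ, y ∉ (B i : Set (EuclideanSpace ℝ (Fin m))) := by
        rw [← measure_eq_zero_iff_ae_notMem]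
        exact hBnull i
      filter_upwards [hae] with y hy
      have hpos : 0 < infDist y ((B i : Set (EuclideanSpace ℝ (Fin m)))) :=
        ((B i).finite_toSet.isClosed.notMem_iff_infDist_pos
          (Finset.coe_nonempty.2 (hBne i))).1 hy
      have hle := hinf_le i y
      rcases eq_or_lt_of_le (hdnn y) with h0 | h0
      · have hdy : d y = 0 := h0.symm
        show Real.log (infDist y ((B i : Set (EuclideanSpace ℝ (Fin m))))) ≤ _
        have hH0 : H δ y = 0 := by
          show (if d y = 0 then (0:ℝ) else _) = 0
          rw [if_pos hdy]
        rw [hH0]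
        apply Real.log_nonpos hpos.le
        rw [hdy] at hle
        linarith
      · have hdy : d y ≠ 0 := h0.ne'
        show Real.log (infDist y ((B i : Set (EuclideanSpace ℝ (Fin m))))) ≤ _
        have hHv : H δ y = Real.log (d y + δ) := by
          show (if d y = 0 then (0:ℝ) else _) = _
          rw [if_neg hdy]
        rw [hHv]
        exact Real.log_le_log hpos (by linarith)
    have hBint : ∀ i, Integrable (lid (B i)) μ := by
      intro i
      set G : EuclideanSpace ℝ (Fin m) → ℝ :=
        fun y => |H δ y| + ∑ p ∈ P, max (-Real.log (dist y (p + sv))) 0 with hG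
      have hGint : Integrable G μ := by
        refine ((hH_int δ hδ0 hδ1).abs).add ?_
        exact integrable_finset_sum _ fun p hp => integrable_neglog_of_psi (htP p hp)
      have hGnn2 : ∀ y, 0 ≤ ∑ p ∈ P, max (-Real.log (dist y (p + sv))) 0 :=
        fun y => Finset.sum_nonneg fun p _ => le_max_right _ _
      refine Integrable.mono' hGint (lid_measurable _).aestronglyMeasurable ?_
      filter_upwards [hptwise i] with y hy
      rw [Real.norm_eq_abs, abs_le]
      constructor
      · -- lower bound : -G y ≤ lid (B i) y
        obtain ⟨b, hb, hbd⟩ := (B i).finite_toSet.isCompact.exists_infDist_eq_dist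
          (Finset.coe_nonempty.2 (hBne i)) y
        have hblid : lid (B i) y = Real.log (dist y b) := by
          show Real.log _ = _
          rw [hbd]
        obtain ⟨p, hp, rfl⟩ := hBsubP i b (Finset.mem_coe.1 hb)
        have hterm : -Real.log (dist y (p + sv))
            ≤ ∑ p' ∈ P, max (-Real.log (dist y (p' + sv))) 0 := by
          calc -Real.log (dist y (p + sv)) ≤ max (-Real.log (dist y (p + sv))) 0 :=
                le_max_left _ _
            _ ≤ ∑ p' ∈ P, max (-Real.log (dist y (p' + sv))) 0 :=
                Finset.single_le_sum (f := fun p' => max (-Real.log (dist y (p' + sv))) 0)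
                  (fun p' _ => le_max_right _ _) hp
        have habs : 0 ≤ |H δ y| := abs_nonneg _
        have hGy : G y = |H δ y| + ∑ p' ∈ P, max (-Real.log (dist y (p' + sv))) 0 := rfl
        rw [hblid]
        linarith [hterm]
      · -- upper
        have hGy : G y = |H δ y| + ∑ p' ∈ P, max (-Real.log (dist y (p' + sv))) 0 := rfl
        linarith [hy.trans (le_abs_self _), hGnn2 y]
    have hconvint : Integrable (lid A'') (∑ i, (a i) • μ.map (· + x i)) := by
      refine (integrable_conv_iff a x μ ha' (lid_measurable A'')).2 fun i => ?_
      rw [lid_comp_eq]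
      exact hBint i
    refine ⟨A'', hA''ne, hA''card, ?_⟩
    have hdec := integral_conv a x μ ha' (lid_measurable A'') hconvint
    have hcomp : ∀ i, ∫ y, lid A'' (y + x i) ∂μ = ∫ y, lid (B i) y ∂μ := by
      intro i
      congr 1
      exact lid_comp_eq A'' (x i)
    have hterm_le : ∀ i, ∫ y, lid (B i) y ∂μ ≤ ∫ y, H δ y ∂μ := fun i =>
      integral_mono_ae (hBint i) (hH_int δ hδ0 hδ1) (hptwise i)
    have hsum' : ∑ i, (a i : ℝ) = 1 := by exact_mod_cast congrArg NNReal.toReal hsum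
    calc qval (∑ i, (a i) • μ.map (· + x i)) A''
        = ∑ i, (a i : ℝ) * ∫ y, lid A'' (y + x i) ∂μ := hdec
      _ ≤ ∑ i, (a i : ℝ) * ∫ y, H δ y ∂μ := by
          apply Finset.sum_le_sum
          intro i _
          rw [hcomp i]
          exact mul_le_mul_of_nonneg_left (hterm_le i) (a i).coe_nonneg
      _ = ∫ y, H δ y ∂μ := by rw [← Finset.sum_mul, hsum', one_mul]
      _ ≤ qval μ A + ε := hj
  · -- non-integrable case
    refine ⟨A.image (· + x ⟨0, hk⟩), hA.image _, ?_, ?_⟩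
    · exact le_trans (Finset.card_image_le) (Nat.le_mul_of_pos_right _ hk)
    · have hval : qval μ A = 0 := integral_undef hg
      have hni : ¬ Integrable (lid (A.image (· + x ⟨0, hk⟩)))
          (∑ i, (a i) • μ.map (· + x i)) := by
        intro hint
        have hcomp := (integrable_conv_iff a x μ ha' (lid_measurable _)).1 hint ⟨0, hk⟩
        rw [show (fun y => lid (A.image (· + x ⟨0, hk⟩)) (y + x ⟨0, hk⟩))
            = lid ((A.image (· + x ⟨0, hk⟩)).image (· + (-x ⟨0, hk⟩))) from
          lid_comp_eq _ _] at hcomp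
        have himg : (A.image (· + x ⟨0, hk⟩)).image (· + (-x ⟨0, hk⟩)) = A := by
          rw [Finset.image_image]
          have : ((· + (-x ⟨0, hk⟩)) ∘ (· + x ⟨0, hk⟩)) = id := by
            funext z; simp [Function.comp]
          rw [this, Finset.image_id]
        rw [himg] at hcomp
        exact hg hcomp
      have hval' : qval (∑ i, (a i) • μ.map (· + x i)) (A.image (· + x ⟨0, hk⟩)) = 0 :=
        integral_undef hni
      rw [hval, hval']
      linarith

end ClaimA



lemma tendsto_zero_of_ev {gfun : ℕ → ℝ} {D : ℝ} (h : Tendsto gfun atTop (nhds D))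
    (h0 : ∀ᶠ n in atTop, gfun n = 0) : D = 0 :=
  tendsto_nhds_unique h
    ((tendsto_const_nhds : Tendsto (fun _ : ℕ => (0:ℝ)) atTop (nhds 0)).congr'
      (h0.mono fun _ hn => hn.symm))

end QDAux

open QDAux

theorem qdimZero_convolution_invariant (m k : ℕ) (hk : 0 < k)
    (μ : Measure (EuclideanSpace ℝ (Fin m))) [IsFiniteMeasure μ]
    (a : Fin k → NNReal) (ha : ∀ i, 0 < a i) (hsum : ∑ i, a i = 1)
    (x : Fin k → EuclideanSpace ℝ (Fin m))
    (Dμ Dc : ℝ) (hμ : HasQDimZero m μ Dμ)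
    (hc : HasQDimZero m (∑ i, (a i) • μ.map (· + x i)) Dc) :
    Dc = Dμ := by
  classical
  rcases Nat.eq_zero_or_pos m with hm0 | hm
  · -- dimension zero: everything trivial
    subst hm0
    have hzero : ∀ (ρ : Measure (EuclideanSpace ℝ (Fin 0))) (n : ℕ), 1 ≤ n →
        logEn 0 n ρ = 0 := by
      intro ρ n hn
      have hval : ∀ A : Finset (EuclideanSpace ℝ (Fin 0)), A.Nonempty → qval ρ A = 0 := by
        intro A hA
        have hl : ∀ y, lid A y = 0 := by
          intro y
          obtain ⟨b, hb⟩ := hA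
          have hyb : y = b := PiLp.ext fun i => Fin.elim0 i
          have hy : y ∈ (A : Set (EuclideanSpace ℝ (Fin 0))) := by
            rw [hyb]; exact Finset.mem_coe.2 hb
          show Real.log (infDist y (A : Set (EuclideanSpace ℝ (Fin 0)))) = 0
          rw [infDist_zero_of_mem hy, Real.log_zero]
        show (∫ y, lid A y ∂ρ) = 0
        rw [show lid A = fun _ => (0:ℝ) from funext hl]
        simp
      have hqs : qset n ρ = {0} := by
        apply Set.eq_singleton_iff_unique_mem.2
        constructor
        · exact ⟨{0}, Finset.singleton_nonempty _, by simpa using hn,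
            (hval _ (Finset.singleton_nonempty _)).symm⟩
        · rintro c ⟨A, hA, hcard, rfl⟩; exact hval A hA
      rw [logEn_eq, hqs, csInf_singleton]
    have hDμ : Dμ = 0 := tendsto_zero_of_ev hμ (by
      filter_upwards [eventually_ge_atTop 1] with n hn
      rw [hzero μ n hn, neg_zero, div_zero])
    have hDc : Dc = 0 := tendsto_zero_of_ev hc (by
      filter_upwards [eventually_ge_atTop 1] with n hn
      rw [hzero _ n hn, neg_zero, div_zero])
    rw [hDμ, hDc]
  · set ν : Measure (EuclideanSpace ℝ (Fin m)) := ∑ i, (a i) • μ.map (· + x i) with hν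
    set E : ℕ → ℝ := fun n => logEn m n μ with hE
    set F : ℕ → ℝ := fun n => logEn m n ν with hF
    have hqne : ∀ n : ℕ, 1 ≤ n → (qset n μ).Nonempty := fun n hn => qset_nonempty μ hn
    have hqneν : ∀ n : ℕ, 1 ≤ n → (qset n ν).Nonempty := fun n hn => qset_nonempty ν hn
    have hBlow : ∀ n : ℕ, BddBelow (qset n μ) → ∀ c ∈ qset n ν, E n ≤ c := by
      intro n hbb c hc'
      obtain ⟨A', hA'ne, hA'card, rfl⟩ := hc'
      obtain ⟨i, hi⟩ := claimB hk a x μ ha hsum A'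
      refine le_trans (csInf_le hbb ?_) hi
      exact qval_mem μ (hA'ne.image _) (le_trans Finset.card_image_le hA'card)
    have hFbddOf : ∀ n : ℕ, BddBelow (qset n μ) → BddBelow (qset n ν) := fun n hbb =>
      ⟨E n, fun c hc' => hBlow n hbb c hc'⟩
    have hAtrans : ∀ (n : ℕ) (c : ℝ), c ∈ qset n μ → ∀ ε : ℝ, 0 < ε →
        ∃ c' ∈ qset (n * k) ν, c' ≤ c + ε := by
      intro n c hc' ε hε
      obtain ⟨A, hAne, hAcard, rfl⟩ := hc'
      obtain ⟨A'', h1, h2, h3⟩ := claimA hm hk a x μ ha hsum A hAne hε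
      exact ⟨qval ν A'', qval_mem ν h1 (h2.trans (Nat.mul_le_mul_right k hAcard)), h3⟩
    by_cases hJ : ∀ n : ℕ, BddBelow (qset n μ)
    · -- all bounded below
      have hEmono : ∀ p q : ℕ, 1 ≤ p → p ≤ q → E q ≤ E p := fun p q hp hpq =>
        csInf_le_csInf (hJ q) (hqne p hp) (qset_mono μ hpq)
      have hEFn : ∀ n : ℕ, 1 ≤ n → E n ≤ F n := fun n hn =>
        le_csInf (hqneν n hn) (hBlow n (hJ n))
      have hFE : ∀ n : ℕ, 1 ≤ n → F (n * k) ≤ E n := by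
        intro n hn
        apply le_csInf (hqne n hn)
        intro c hc'
        refine le_of_forall_pos_le_add ?_
        intro ε hε
        obtain ⟨c', hc'', hle⟩ := hAtrans n c hc' ε hε
        exact le_trans (csInf_le (hFbddOf _ (hJ _)) hc'') hle
      have hFmono : ∀ p q : ℕ, 1 ≤ p → p ≤ q → F q ≤ F p := fun p q hp hpq =>
        csInf_le_csInf (hFbddOf q (hJ q)) (hqneν p hp) (qset_mono ν hpq)
      have hnk : ∀ n : ℕ, n ≤ n * k := fun n => Nat.le_mul_of_pos_right n hk
      by_cases hbb : ∃ Bd : ℝ, ∀ n : ℕ, 1 ≤ n → Bd ≤ E n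
      · obtain ⟨Bd, hBd⟩ := hbb
        by_cases hz : ∀ N : ℕ, ∃ n : ℕ, N ≤ n ∧ 1 ≤ n ∧ E n = 0
        · -- E is eventually zero
          obtain ⟨n₀, _, hn₀1, hn₀z⟩ := hz 1
          have hEz : ∀ n : ℕ, n₀ ≤ n → E n = 0 := by
            intro n hn
            obtain ⟨n', hn'1, hn'2, hn'3⟩ := hz n
            have h1 : E n ≤ 0 := hn₀z ▸ hEmono n₀ n hn₀1 hn
            have h2 : 0 ≤ E n := by
              rw [← hn'3]; exact hEmono n n' (le_trans hn₀1 hn) hn'1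
            linarith
          have hDμ : Dμ = 0 := tendsto_zero_of_ev hμ (by
            filter_upwards [eventually_ge_atTop n₀] with n hn
            show Real.log n / (-E n) = 0
            rw [hEz n hn, neg_zero, div_zero])
          have hk1 : 1 ≤ n₀ * k := le_trans hn₀1 (hnk n₀)
          have hFz : ∀ n : ℕ, n₀ * k ≤ n → F n = 0 := by
            intro n hn
            have h1 : F n ≤ 0 := by
              have h2 := hFmono (n₀ * k) n hk1 hn
              have h3 := hFE n₀ hn₀1
              rw [hn₀z] at h3
              linarith
            have h2 : 0 ≤ F n := by
              have h3 := hEFn n (le_trans hk1 hn)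
              rw [hEz n (le_trans (hnk n₀) hn)] at h3
              linarith
            linarith
          have hDc : Dc = 0 := tendsto_zero_of_ev hc (by
            filter_upwards [eventually_ge_atTop (n₀ * k)] with n hn
            show Real.log n / (-F n) = 0
            rw [hFz n hn, neg_zero, div_zero])
          rw [hDμ, hDc]
        · -- impossible : E bounded and eventually nonzero
          exfalso
          push_neg at hz
          obtain ⟨N₁, hN₁⟩ := hz
          set C : ℝ := max |Bd| |E 1| + 1 with hC
          have hC0 : 0 < C := by positivity
          have hCb : ∀ n : ℕ, 1 ≤ n → |E n| ≤ C := by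
            intro n hn
            rw [abs_le]
            constructor
            · have h1 := hBd n hn
              have h2 : -|Bd| ≤ Bd := neg_abs_le _
              have h3 : |Bd| ≤ max |Bd| |E 1| := le_max_left _ _
              linarith
            · have h1 := hEmono 1 n le_rfl hn
              have h2 : E 1 ≤ |E 1| := le_abs_self _
              have h3 : |E 1| ≤ max |Bd| |E 1| := le_max_right _ _
              linarith
          obtain ⟨N₂, hN₂⟩ := Metric.tendsto_atTop.1 hμ 1 one_pos
          have hlog : Tendsto (fun n : ℕ => Real.log n) atTop atTop :=
            Real.tendsto_log_atTop.comp tendsto_natCast_atTop_atTop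
          obtain ⟨n, hn⟩ := ((((hlog.eventually_gt_atTop ((|Dμ| + 1) * C)).and
            (eventually_ge_atTop N₁)).and (eventually_ge_atTop N₂)).and
            (eventually_ge_atTop 1)).exists
          obtain ⟨⟨⟨hbig, hn1⟩, hn2⟩, hn3⟩ := hn
          have hEne : E n ≠ 0 := by
            intro h0
            exact hN₁ n hn1 hn3 h0
          have hfn : |Real.log n / (-E n) - Dμ| < 1 := by
            have := hN₂ n hn2
            rwa [Real.dist_eq] at this
          have hfabs : |Real.log n / (-E n)| ≤ |Dμ| + 1 := by
            have h1 : |Real.log n / (-E n)| - |Dμ| ≤ |Real.log n / (-E n) - Dμ| :=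
              abs_sub_abs_le_abs_sub _ _
            linarith
          have heq : Real.log n / (-E n) * (-E n) = Real.log n :=
            div_mul_cancel₀ _ (neg_ne_zero.2 hEne)
          have habs : |Real.log n| ≤ (|Dμ| + 1) * C := by
            rw [← heq, abs_mul, abs_neg]
            exact mul_le_mul hfabs (hCb n hn3) (abs_nonneg _) (by positivity)
          have : Real.log n ≤ (|Dμ| + 1) * C := (le_abs_self _).trans habs
          linarith
      · -- E tends to -infinity : the squeeze
        push_neg at hbb
        have hEtb : Tendsto E atTop atBot := by
          rw [tendsto_atBot]
          intro b
          obtain ⟨n_b, hnb1, hnb2⟩ := hbb b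
          filter_upwards [eventually_ge_atTop n_b] with n hn
          exact le_trans (hEmono n_b n hnb1 hn) hnb2.le
        have hEneg : Tendsto (fun n => -E n) atTop atTop :=
          tendsto_neg_atBot_atTop.comp hEtb
        have hsmall : Tendsto (fun n : ℕ => Real.log k / (-E n)) atTop (nhds 0) :=
          Filter.Tendsto.div_atTop tendsto_const_nhds hEneg
        have hup : Tendsto (fun n : ℕ => Real.log n / (-E n) + Real.log k / (-E n))
            atTop (nhds Dμ) := by
          have := hμ.add hsmall
          simpa using this
        have hmulk : Tendsto (fun n : ℕ => n * k) atTop atTop :=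
          tendsto_atTop_mono hnk tendsto_id
        have hgk : Tendsto (fun n : ℕ => Real.log (↑(n * k)) / (-F (n * k)))
            atTop (nhds Dc) := hc.comp hmulk
        have hfk : Tendsto (fun n : ℕ => Real.log (↑(n * k)) / (-E (n * k)))
            atTop (nhds Dμ) := hμ.comp hmulk
        have hevfacts : ∀ᶠ n : ℕ in atTop, E n ≤ -1 ∧ 1 ≤ n :=
          (hEtb.eventually (eventually_le_atBot (-1))).and (eventually_ge_atTop 1)
        have key1 : ∀ᶠ n : ℕ in atTop, Real.log (↑(n * k)) / (-F (n * k))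
            ≤ Real.log n / (-E n) + Real.log k / (-E n) := by
          filter_upwards [hevfacts] with n hn
          obtain ⟨hE1, hn1⟩ := hn
          have hnk1 : (1:ℕ) ≤ n * k := le_trans hn1 (hnk n)
          have hEnk : E (n * k) ≤ E n := hEmono n (n * k) hn1 (hnk n)
          have hEFnk : E (n * k) ≤ F (n * k) := hEFn (n * k) hnk1
          have hFEn : F (n * k) ≤ E n := hFE n hn1
          have hEpos : (0:ℝ) < -E n := by linarith
          have hFpos : (0:ℝ) < -F (n * k) := by linarith
          have hcast : Real.log (↑(n * k)) = Real.log n + Real.log k := by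
            rw [Nat.cast_mul]
            refine Real.log_mul ?_ ?_
            · exact_mod_cast Nat.one_le_iff_ne_zero.1 hn1
            · exact_mod_cast Nat.pos_iff_ne_zero.1 hk
          have hnum : (0:ℝ) ≤ Real.log (↑(n * k)) :=
            Real.log_nonneg (by exact_mod_cast hnk1)
          have hstep : Real.log (↑(n * k)) / (-F (n * k))
              ≤ Real.log (↑(n * k)) / (-E n) := by
            apply div_le_div_of_nonneg_left hnum hEpos
            linarith
          calc Real.log (↑(n * k)) / (-F (n * k))
              ≤ Real.log (↑(n * k)) / (-E n) := hstep
            _ = Real.log n / (-E n) + Real.log k / (-E n) := by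
                rw [hcast, add_div]
        have key2 : ∀ᶠ n : ℕ in atTop, Real.log (↑(n * k)) / (-E (n * k))
            ≤ Real.log (↑(n * k)) / (-F (n * k)) := by
          filter_upwards [hevfacts] with n hn
          obtain ⟨hE1, hn1⟩ := hn
          have hnk1 : (1:ℕ) ≤ n * k := le_trans hn1 (hnk n)
          have hEnk : E (n * k) ≤ E n := hEmono n (n * k) hn1 (hnk n)
          have hEFnk : E (n * k) ≤ F (n * k) := hEFn (n * k) hnk1
          have hFEn : F (n * k) ≤ E n := hFE n hn1
          have hFpos : (0:ℝ) < -F (n * k) := by linarith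
          have hnum : (0:ℝ) ≤ Real.log (↑(n * k)) :=
            Real.log_nonneg (by exact_mod_cast hnk1)
          apply div_le_div_of_nonneg_left hnum hFpos
          linarith
        have h1 : Dc ≤ Dμ := le_of_tendsto_of_tendsto hgk hup key1
        have h2 : Dμ ≤ Dc := le_of_tendsto_of_tendsto hfk hgk key2
        linarith
    · -- some level is unbounded below
      push_neg at hJ
      obtain ⟨n₀, hn₀⟩ := hJ
      have hEz : ∀ N : ℕ, n₀ ≤ N → E N = 0 := by
        intro N hle
        have hnb : ¬ BddBelow (qset N μ) := fun hbb => hn₀ (hbb.mono (qset_mono μ hle))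
        show logEn m N μ = 0
        rw [logEn_eq, csInf_of_not_bddBelow hnb, Real.sInf_empty]
      have hDμ : Dμ = 0 := tendsto_zero_of_ev hμ (by
        filter_upwards [eventually_ge_atTop n₀] with n hn
        show Real.log n / (-E n) = 0
        rw [hEz n hn, neg_zero, div_zero])
      have hνnb : ¬ BddBelow (qset (n₀ * k) ν) := by
        intro hbb
        obtain ⟨b, hb⟩ := hbb
        apply hn₀
        refine ⟨b - 1, ?_⟩
        intro c hc'
        obtain ⟨c', hc'', hle⟩ := hAtrans n₀ c hc' 1 one_pos
        have hbc := hb hc''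
        linarith
      have hFz : ∀ N : ℕ, n₀ * k ≤ N → F N = 0 := by
        intro N hle
        have hnb : ¬ BddBelow (qset N ν) := fun hbb => hνnb (hbb.mono (qset_mono ν hle))
        show logEn m N ν = 0
        rw [logEn_eq, csInf_of_not_bddBelow hnb, Real.sInf_empty]
      have hDc : Dc = 0 := tendsto_zero_of_ev hc (by
        filter_upwards [eventually_ge_atTop (n₀ * k)] with n hn
        show Real.log n / (-F n) = 0
        rw [hFz n hn, neg_zero, div_zero])
      rw [hDμ, hDc]
end
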